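/- Fix n ≥ 2, an integer B with 2 ≤ B ≤ n, μ ∈ (0,1), p ∈ (1/2,1), τ ∈ (0,1), and ψ ∈ [0,1]. Define f(λ) := p_l(1−τ)φ(pψ+(1−p)λ, n−1, B−1) − (1−p_l)τφ((1−p)ψ+pλ, n−1, B−1) for λ ∈ [0,1]. If λ₀ ∈ (0,1) satisfies λ₀ ≤ ψ and f(λ₀) = 0, then f(λ) > 0 for every λ ∈ [0,λ₀) and f(λ) < 0 for every λ ∈ (λ₀, ψ]. -/

import Mathlib

open Finset Filter

/-- Upper tail of a Binomial(m,γ): probability of at least `k` successes in `m` trials. -/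
noncomputable def phi (γ : ℝ) (m k : ℕ) : ℝ :=
  ∑ j ∈ Finset.Icc k m, (m.choose j : ℝ) * γ ^ j * (1 - γ) ^ (m - j)

/-- Posterior probability of state H given a low signal. -/
noncomputable def pLow (μ p : ℝ) : ℝ := (1 - p) * μ / ((1 - p) * μ + p * (1 - μ))

/-- Posterior probability of state H given a high signal. -/
noncomputable def pHigh (μ p : ℝ) : ℝ := p * μ / (p * μ + (1 - p) * (1 - μ))

/-- Probability that a player contributes in state H under symmetric strategy (lam, psi). -/
noncomputable def alphaH (p lam psi : ℝ) : ℝ := p * psi + (1 - p) * lam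

/-- Probability that a player contributes in state L under symmetric strategy (lam, psi). -/
noncomputable def alphaL (p lam psi : ℝ) : ℝ := (1 - p) * psi + p * lam

/-- Expected utility of contributing for a low-signal player. -/
noncomputable def Ulow (n B : ℕ) (μ p τ lam psi : ℝ) : ℝ :=
  pLow μ p * (1 - τ) * phi (alphaH p lam psi) (n - 1) (B - 1)
    - (1 - pLow μ p) * τ * phi (alphaL p lam psi) (n - 1) (B - 1)

/-- Expected utility of contributing for a high-signal player. -/
noncomputable def Uhigh (n B : ℕ) (μ p τ lam psi : ℝ) : ℝ :=
  pHigh μ p * (1 - τ) * phi (alphaH p lam psi) (n - 1) (B - 1)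
    - (1 - pHigh μ p) * τ * phi (alphaL p lam psi) (n - 1) (B - 1)

/-- (lam, psi) is a symmetric Bayes–Nash equilibrium of Γ(n,B,μ,p,τ). -/
def IsSymmEq (n B : ℕ) (μ p τ lam psi : ℝ) : Prop :=
  lam ∈ Set.Icc (0:ℝ) 1 ∧ psi ∈ Set.Icc (0:ℝ) 1 ∧
    (0 < lam → 0 ≤ Ulow n B μ p τ lam psi) ∧
    (lam < 1 → Ulow n B μ p τ lam psi ≤ 0) ∧
    (0 < psi → 0 ≤ Uhigh n B μ p τ lam psi) ∧
    (psi < 1 → Uhigh n B μ p τ lam psi ≤ 0)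

/-- The strategy profile (lam, psi) is non-trivial: the good is supplied with
positive probability. -/
def NonTrivial (n B : ℕ) (μ p lam psi : ℝ) : Prop :=
  0 < μ * phi (alphaH p lam psi) n B + (1 - μ) * phi (alphaL p lam psi) n B

/-- The correctness index of Γ(n,B,μ,p,τ) at the symmetric strategy (lam, psi). -/
noncomputable def thetaIdx (n B : ℕ) (μ p lam psi : ℝ) : ℝ :=
  μ * phi (alphaH p lam psi) n B + (1 - μ) * (1 - phi (alphaL p lam psi) n B)

/-- Expected fraction of contributors collected from a Binomial(n,γ) number of
contributors, counted only when the threshold B is met. -/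
noncomputable def tailExp (γ : ℝ) (n B : ℕ) : ℝ :=
  ∑ j ∈ Finset.Icc B n, ((j : ℝ) / n) * (n.choose j : ℝ) * γ ^ j * (1 - γ) ^ (n - j)

/-- The participation index of Γ(n,B,μ,p,τ) at the symmetric strategy (lam, psi). -/
noncomputable def partIdx (n B : ℕ) (μ p lam psi : ℝ) : ℝ :=
  μ * tailExp (alphaH p lam psi) n B + (1 - μ) * tailExp (alphaL p lam psi) n B

lemma phi_pos {γ : ℝ} (h0 : 0 < γ) (h1 : γ ≤ 1) {m k : ℕ} (hk : k ≤ m) : 0 < phi γ m k := by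
  have hmem : m ∈ Finset.Icc k m := Finset.mem_Icc.2 ⟨hk, le_rfl⟩
  have hterm : (0:ℝ) < (m.choose m : ℝ) * γ ^ m * (1 - γ) ^ (m - m) := by
    simp [Nat.choose_self]
    positivity
  have hle : (m.choose m : ℝ) * γ ^ m * (1 - γ) ^ (m - m) ≤ phi γ m k := by
    apply Finset.single_le_sum (f := fun j => (m.choose j : ℝ) * γ ^ j * (1 - γ) ^ (m - j)) _ hmem
    intro j hj
    have := pow_nonneg h0.le j
    have := pow_nonneg (by linarith : (0:ℝ) ≤ 1 - γ) (m - j)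
    positivity
  linarith

noncomputable def tAux (m : ℕ) (γ : ℝ) (j : ℕ) : ℝ :=
  (j : ℝ) * (m.choose j : ℝ) * γ ^ (j - 1) * (1 - γ) ^ (m - j)

lemma phi_hasDerivAt {m k : ℕ} (hk : k ≤ m) (γ : ℝ) :
    HasDerivAt (fun x => phi x m k)
      ((k : ℝ) * (m.choose k : ℝ) * γ ^ (k - 1) * (1 - γ) ^ (m - k)) γ := by
  set t : ℕ → ℝ := tAux m γ with ht
  have hterm : ∀ j ∈ Finset.Icc k m,
      HasDerivAt (fun x : ℝ => (m.choose j : ℝ) * x ^ j * (1 - x) ^ (m - j))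
        (t j - t (j + 1)) γ := by
    intro j hj
    obtain ⟨hkj, hjm⟩ := Finset.mem_Icc.1 hj
    have h1 : HasDerivAt (fun x : ℝ => x ^ j) ((j : ℝ) * γ ^ (j - 1)) γ := hasDerivAt_pow j γ
    have hs : HasDerivAt (fun x : ℝ => 1 - x) (-1) γ := by
      simpa using (hasDerivAt_id γ).const_sub 1
    have h2 : HasDerivAt (fun x : ℝ => (1 - x) ^ (m - j))
        (((m - j : ℕ) : ℝ) * (1 - γ) ^ (m - j - 1) * (-1)) γ :=
      (hasDerivAt_pow (m - j) (1 - γ)).comp γ hs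
    have h3 := ((h1.mul h2).const_mul ((m.choose j : ℝ)))
    convert h3 using 1
    · rfl
    · rfl
    · funext x; simp only [Pi.mul_apply]; ring
    have hco : ((m.choose (j+1) : ℝ)) * ((j:ℝ) + 1) = (m.choose j : ℝ) * ((m : ℝ) - (j : ℝ)) := by
      have h := Nat.choose_succ_right_eq m j
      have h2 : ((m.choose (j+1)) : ℝ) * ((j:ℝ)+1) = ((m.choose j) : ℝ) * (((m-j : ℕ)) : ℝ) := by
        exact_mod_cast congrArg (fun x : ℕ => (x:ℝ)) h
      rw [Nat.cast_sub hjm] at h2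
      exact h2
    have hmj : ((m - j : ℕ) : ℝ) = (m : ℝ) - (j : ℝ) := Nat.cast_sub hjm
    have hexp : m - (j + 1) = m - j - 1 := by omega
    show tAux m γ j - tAux m γ (j+1) = _
    simp only [tAux, hexp, hmj]
    push_cast
    linear_combination (-(γ ^ j * (1 - γ) ^ (m - j - 1))) * hco
  have hsum : HasDerivAt (fun x => phi x m k) (∑ j ∈ Finset.Icc k m, (t j - t (j + 1))) γ := by
    unfold phi
    exact HasDerivAt.fun_sum hterm
  have htel : ∑ j ∈ Finset.Icc k m, (t j - t (j + 1)) = t k - t (m + 1) := by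
    rw [← Finset.Ico_add_one_right_eq_Icc, Finset.sum_Ico_eq_sum_range]
    have e1 : k + (m + 1 - k) = m + 1 := by omega
    calc ∑ i ∈ Finset.range (m+1-k), (t (k+i) - t (k+i+1))
        = ∑ i ∈ Finset.range (m+1-k), (t (k+i) - t (k+(i+1))) := by
          apply Finset.sum_congr rfl; intro i _; rw [add_assoc]
      _ = t (k+0) - t (k+(m+1-k)) := Finset.sum_range_sub' _ _
      _ = t k - t (m+1) := by rw [add_zero, e1]
  have htm : t (m + 1) = 0 := by
    simp [ht, tAux, Nat.choose_eq_zero_of_lt (by omega : m < m + 1)]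
  rw [htel, htm, sub_zero] at hsum
  exact hsum

lemma phi_cross {m k : ℕ} (hk : 1 ≤ k) {x y : ℝ} (hx : 0 ≤ x) (hxy : x ≤ y) (hy : y ≤ 1) :
    y ^ (k - 1) * (1 - y) ^ (m - k) * phi x m k ≤ x ^ (k - 1) * (1 - x) ^ (m - k) * phi y m k := by
  unfold phi
  rw [Finset.mul_sum, Finset.mul_sum]
  apply Finset.sum_le_sum
  intro j hj
  obtain ⟨hkj, hjm⟩ := Finset.mem_Icc.1 hj
  have hy0 : (0:ℝ) ≤ y := le_trans hx hxy
  have h1x : (0:ℝ) ≤ 1 - x := by linarith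
  have h1y : (0:ℝ) ≤ 1 - y := by linarith
  set i := j - k with hi
  have ex : x ^ j = x ^ (k - 1) * x ^ (i + 1) := by rw [← pow_add]; congr 1; omega
  have ey : y ^ j = y ^ (k - 1) * y ^ (i + 1) := by rw [← pow_add]; congr 1; omega
  have e1x : (1 - x) ^ (m - k) = (1 - x) ^ (m - j) * (1 - x) ^ i := by
    rw [← pow_add]; congr 1; omega
  have e1y : (1 - y) ^ (m - k) = (1 - y) ^ (m - j) * (1 - y) ^ i := by
    rw [← pow_add]; congr 1; omega
  have core : x ^ (i + 1) * (1 - y) ^ i ≤ y ^ (i + 1) * (1 - x) ^ i := by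
    have h1 : x * (1 - y) ≤ y * (1 - x) := by nlinarith
    have h2 : (x * (1 - y)) ^ i ≤ (y * (1 - x)) ^ i :=
      pow_le_pow_left₀ (by positivity) h1 i
    calc x ^ (i + 1) * (1 - y) ^ i = x * (x * (1 - y)) ^ i := by rw [mul_pow]; ring
      _ ≤ y * (y * (1 - x)) ^ i := by
          apply mul_le_mul hxy h2 (by positivity) hy0
      _ = y ^ (i + 1) * (1 - x) ^ i := by rw [mul_pow]; ring
  rw [ex, ey, e1x, e1y]
  have hK : (0:ℝ) ≤ (m.choose j : ℝ) * (x ^ (k-1) * y ^ (k-1) * ((1-x) ^ (m-j) * (1-y) ^ (m-j))) := by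
    positivity
  have hmul := mul_le_mul_of_nonneg_left core hK
  calc y ^ (k-1) * ((1-y) ^ (m-j) * (1-y) ^ i) * ((m.choose j : ℝ) * (x ^ (k-1) * x ^ (i+1)) * (1-x) ^ (m-j))
      = ((m.choose j : ℝ) * (x ^ (k-1) * y ^ (k-1) * ((1-x) ^ (m-j) * (1-y) ^ (m-j)))) * (x ^ (i+1) * (1-y) ^ i) := by ring
    _ ≤ ((m.choose j : ℝ) * (x ^ (k-1) * y ^ (k-1) * ((1-x) ^ (m-j) * (1-y) ^ (m-j)))) * (y ^ (i+1) * (1-x) ^ i) := hmul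
    _ = x ^ (k-1) * ((1-x) ^ (m-j) * (1-x) ^ i) * ((m.choose j : ℝ) * (y ^ (k-1) * y ^ (i+1)) * (1-y) ^ (m-j)) := by ring


set_option maxHeartbeats 1000000 in
/-- single crossing of the low-signal player's utility in λ. -/
theorem stmt3 (n B : ℕ) (μ p τ ψ : ℝ) (hn : 2 ≤ n) (hB1 : 2 ≤ B) (hB2 : B ≤ n)
    (hμ : μ ∈ Set.Ioo (0:ℝ) 1) (hp : p ∈ Set.Ioo (1/2 : ℝ) 1) (hτ : τ ∈ Set.Ioo (0:ℝ) 1)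
    (hψ : ψ ∈ Set.Icc (0:ℝ) 1)
    (f : ℝ → ℝ)
    (hf : ∀ lam, f lam =
      pLow μ p * (1 - τ) * phi (p * ψ + (1 - p) * lam) (n - 1) (B - 1)
        - (1 - pLow μ p) * τ * phi ((1 - p) * ψ + p * lam) (n - 1) (B - 1))
    (lam0 : ℝ) (hlam0 : lam0 ∈ Set.Ioo (0:ℝ) 1) (hle : lam0 ≤ ψ) (hroot : f lam0 = 0) :
    (∀ lam, 0 ≤ lam → lam < lam0 → 0 < f lam) ∧
    (∀ lam, lam0 < lam → lam ≤ ψ → f lam < 0) := by 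
  obtain ⟨hμ0, hμ1⟩ := hμ
  obtain ⟨hp1, hp2⟩ := hp
  obtain ⟨hτ0, hτ1⟩ := hτ
  obtain ⟨hψ0, hψ1⟩ := hψ
  obtain ⟨hl0, hl1⟩ := hlam0
  have hψpos : 0 < ψ := lt_of_lt_of_le hl0 hle
  set m := n - 1 with hm
  set k := B - 1 with hkdef
  have hk1 : 1 ≤ k := by omega
  have hkm : k ≤ m := by omega
  set A := pLow μ p * (1 - τ) with hA
  set Cc := (1 - pLow μ p) * τ with hCc
  have hd0 : 0 < (1 - p) * μ + p * (1 - μ) := by nlinarith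
  have hpl0 : 0 < pLow μ p := div_pos (by nlinarith) hd0
  have hpl1 : pLow μ p < 1 := by
    rw [pLow, div_lt_one hd0]; nlinarith
  have hApos : 0 < A := by rw [hA]; nlinarith
  have hCpos : 0 < Cc := by rw [hCc]; nlinarith
  set γH : ℝ → ℝ := fun l => p * ψ + (1 - p) * l with hγH
  set γL : ℝ → ℝ := fun l => (1 - p) * ψ + p * l with hγL
  have hf' : ∀ l, f l = A * phi (γH l) m k - Cc * phi (γL l) m k := by
    intro l; rw [hf l]
  have hb : ∀ l, 0 ≤ l → l ≤ ψ →
      0 < γH l ∧ γH l ≤ 1 ∧ 0 < γL l ∧ γL l ≤ 1 ∧ γL l ≤ γH l := by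
    intro l h1 h2
    simp only [hγH, hγL]
    refine ⟨by nlinarith, by nlinarith, by nlinarith, by nlinarith, by nlinarith⟩
  -- positivity of phi along the trajectory
  have hPpos : ∀ l, 0 ≤ l → l ≤ ψ → 0 < phi (γH l) m k ∧ 0 < phi (γL l) m k := by
    intro l h1 h2
    obtain ⟨a1, a2, a3, a4, _⟩ := hb l h1 h2
    exact ⟨phi_pos a1 a2 hkm, phi_pos a3 a4 hkm⟩
  set Φ : ℝ → ℝ := fun l => Real.log (phi (γH l) m k) - Real.log (phi (γL l) m k) with hΦ
  have hphicont : Continuous fun γ : ℝ => phi γ m k := by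
    unfold phi
    exact continuous_finset_sum _ (fun j _ => by continuity)
  have hanti : StrictAntiOn Φ (Set.Icc 0 ψ) := by
    apply strictAntiOn_of_deriv_neg (convex_Icc 0 ψ)
    · apply ContinuousOn.sub
      · apply ContinuousOn.log
        · exact (hphicont.comp (by continuity)).continuousOn
        · intro l hl
          exact ne_of_gt (hPpos l hl.1 hl.2).1
      · apply ContinuousOn.log
        · exact (hphicont.comp (by continuity)).continuousOn
        · intro l hl
          exact ne_of_gt (hPpos l hl.1 hl.2).2
    · intro l hl
      rw [interior_Icc] at hl
      obtain ⟨hl1', hl2'⟩ := hl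
      obtain ⟨a1, a2, a3, a4, a5⟩ := hb l hl1'.le hl2'.le
      have hH1 : γH l < 1 := by
        simp only [hγH]; nlinarith
      have hL1 : γL l < 1 := by
        simp only [hγL]; nlinarith
      obtain ⟨hPH, hPL⟩ := hPpos l hl1'.le hl2'.le
      set DH := (k : ℝ) * (m.choose k : ℝ) * (γH l) ^ (k - 1) * (1 - γH l) ^ (m - k) with hDH
      set DL := (k : ℝ) * (m.choose k : ℝ) * (γL l) ^ (k - 1) * (1 - γL l) ^ (m - k) with hDL
      have hchoosepos : (0:ℝ) < (m.choose k : ℝ) := by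
        exact_mod_cast Nat.choose_pos hkm
      have hDLpos : 0 < DL := by
        rw [hDL]
        have hkR : (0:ℝ) < (k:ℝ) := by exact_mod_cast hk1
        exact mul_pos (mul_pos (mul_pos hkR hchoosepos) (pow_pos a3 _))
          (pow_pos (by linarith) _)
      have hDHnn : 0 ≤ DH := by
        rw [hDH]
        have h1' : (0:ℝ) ≤ 1 - γH l := by linarith
        exact mul_nonneg (mul_nonneg (mul_nonneg (by positivity) (by positivity))
          (pow_nonneg a1.le _)) (pow_nonneg h1' _)
      have hγH' : HasDerivAt γH (1 - p) l := by
        simpa [hγH] using (((hasDerivAt_id l).const_mul (1 - p)).const_add (p * ψ))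
      have hγL' : HasDerivAt γL p l := by
        simpa [hγL] using (((hasDerivAt_id l).const_mul p).const_add ((1 - p) * ψ))
      have hdH : HasDerivAt (fun x => phi (γH x) m k) (DH * (1 - p)) l :=
        (phi_hasDerivAt hkm (γH l)).comp l hγH'
      have hdL : HasDerivAt (fun x => phi (γL x) m k) (DL * p) l :=
        (phi_hasDerivAt hkm (γL l)).comp l hγL'
      have hΦ' : HasDerivAt Φ (DH * (1 - p) / phi (γH l) m k - DL * p / phi (γL l) m k) l :=
        (hdH.log (ne_of_gt hPH)).sub (hdL.log (ne_of_gt hPL))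
      rw [hΦ'.deriv]
      have key : DH * phi (γL l) m k ≤ DL * phi (γH l) m k := by
        have hc := phi_cross (m := m) hk1 a3.le a5 a2
        have hkc : (0:ℝ) ≤ (k : ℝ) * (m.choose k : ℝ) := by positivity
        have := mul_le_mul_of_nonneg_left hc hkc
        rw [hDH, hDL]
        nlinarith [this]
      rw [sub_neg, div_lt_div_iff₀ hPH hPL]
      nlinarith [mul_le_mul_of_nonneg_left key (by linarith : (0:ℝ) ≤ 1 - p),
        mul_pos hDLpos hPH]
  -- positivity at lam0
  obtain ⟨hPH0, hPL0⟩ := hPpos lam0 hl0.le hle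
  have hroot' : A * phi (γH lam0) m k = Cc * phi (γL lam0) m k := by
    have := hf' lam0
    rw [hroot] at this
    linarith
  have hmem0 : lam0 ∈ Set.Icc (0:ℝ) ψ := ⟨hl0.le, hle⟩
  constructor
  · intro lam h0 hlt
    have hmem : lam ∈ Set.Icc (0:ℝ) ψ := ⟨h0, le_trans hlt.le hle⟩
    have hΦlt : Φ lam0 < Φ lam := hanti hmem hmem0 hlt
    obtain ⟨hPH, hPL⟩ := hPpos lam h0 hmem.2
    have hlog : Real.log (phi (γH lam0) m k * phi (γL lam) m k) <
        Real.log (phi (γH lam) m k * phi (γL lam0) m k) := by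
      rw [Real.log_mul (ne_of_gt hPH0) (ne_of_gt hPL),
        Real.log_mul (ne_of_gt hPH) (ne_of_gt hPL0)]
      simp only [hΦ] at hΦlt
      linarith
    have hcmp := (Real.log_lt_log_iff (mul_pos hPH0 hPL) (mul_pos hPH hPL0)).1 hlog
    rw [hf' lam]
    nlinarith [mul_lt_mul_of_pos_left hcmp hApos, hroot', hPL0, hPL]
  · intro lam hgt hlelam
    have hmem : lam ∈ Set.Icc (0:ℝ) ψ := ⟨le_trans hl0.le hgt.le, hlelam⟩
    have hΦlt : Φ lam < Φ lam0 := hanti hmem0 hmem hgt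
    obtain ⟨hPH, hPL⟩ := hPpos lam hmem.1 hmem.2
    have hlog : Real.log (phi (γH lam) m k * phi (γL lam0) m k) <
        Real.log (phi (γH lam0) m k * phi (γL lam) m k) := by
      rw [Real.log_mul (ne_of_gt hPH0) (ne_of_gt hPL),
        Real.log_mul (ne_of_gt hPH) (ne_of_gt hPL0)]
      simp only [hΦ] at hΦlt
      linarith
    have hcmp := (Real.log_lt_log_iff (mul_pos hPH hPL0) (mul_pos hPH0 hPL)).1 hlog
    rw [hf' lam]
    nlinarith [mul_lt_mul_of_pos_left hcmp hApos, hroot', hPL0, hPL]
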